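/- Generalized q-Vandermonde: for positive integers k, m, n and a composition [λ_1,...,λ_m] of n with partial sums a_i = λ_1+...+λ_i, Σ_{k_1+...+k_m=k} q^{a_1 k_2 + a_2 k_3 + ... + a_{m-1} k_m - e_2(k_1,...,k_m)} Π_{i=1}^{m} [λ_i choose k_i]_q = [n choose k]_q, where e_2(k_1,...,k_m) = Σ_{i<j} k_i k_j and the outer sum is over all m-tuples of nonnegative integers summing to k. -/

import Mathlib

/-- The `q`-shifted factorial `(q;q)_n = (1-q)(1-q²)⋯(1-qⁿ)` in `ℚ(q)`. -/
noncomputable def qShiftedFactorial (n : ℕ) : RatFunc ℚ :=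
  ∏ j ∈ Finset.range n, (1 - RatFunc.X ^ (j + 1))

/-- The Gaussian (q-)binomial coefficient. -/
noncomputable def gaussBinom (n k : ℕ) : RatFunc ℚ :=
  if k ≤ n then qShiftedFactorial n / (qShiftedFactorial k * qShiftedFactorial (n - k)) else 0

lemma one_sub_X_pow_ne (j : ℕ) : (1 - RatFunc.X ^ (j+1) : RatFunc ℚ) ≠ 0 := by
  have h1 : (RatFunc.X ^ (j+1) : RatFunc ℚ) ≠ 1 := by
    rw [← RatFunc.algebraMap_X (K := ℚ), ← map_pow, ← map_one (algebraMap (Polynomial ℚ) (RatFunc ℚ))]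
    intro h
    have := congrArg Polynomial.natDegree (RatFunc.algebraMap_injective ℚ h)
    simp [Polynomial.natDegree_X_pow] at this
  intro h
  exact h1 (by linear_combination -h)

lemma qsf_ne_zero (n : ℕ) : qShiftedFactorial n ≠ 0 :=
  Finset.prod_ne_zero_iff.2 fun j _ => one_sub_X_pow_ne j
lemma qsf_zero : qShiftedFactorial 0 = 1 := by simp [qShiftedFactorial]
lemma qsf_succ (n : ℕ) : qShiftedFactorial (n+1) = qShiftedFactorial n * (1 - RatFunc.X ^ (n+1)) :=
  Finset.prod_range_succ _ _
lemma gb_zero_right (n : ℕ) : gaussBinom n 0 = 1 := by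
  simp [gaussBinom, qsf_zero, div_self (qsf_ne_zero n)]
lemma gb_self (n : ℕ) : gaussBinom n n = 1 := by
  simp [gaussBinom, qsf_zero, div_self (qsf_ne_zero n)]
lemma gb_of_lt {n k : ℕ} (h : n < k) : gaussBinom n k = 0 := by
  simp [gaussBinom, not_le.2 h]

lemma field_aux (q A B P u v w : RatFunc ℚ) (hA : A ≠ 0) (hB : B ≠ 0) (hu : u ≠ 0) (hv : v ≠ 0)
    (hw : w = q * v + u) :
    P * w / (A * u * (B * v)) = q * (P / (A * u * B)) + P / (A * (B * v)) := by
  subst hw; field_simp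

lemma pascal (n k : ℕ) :
    gaussBinom (n+1) (k+1) = RatFunc.X ^ (k+1) * gaussBinom n (k+1) + gaussBinom n k := by
  rcases lt_trichotomy n k with h | rfl | h
  · rw [gb_of_lt (by omega), gb_of_lt (by omega), gb_of_lt h]; ring
  · rw [gb_self, gb_of_lt (by omega), gb_self]; ring
  · obtain ⟨d, rfl⟩ : ∃ d, n = k + 1 + d := ⟨n - (k+1), by omega⟩
    have e1 : k + 1 + d + 1 - (k + 1) = d + 1 := by omega
    have e2 : k + 1 + d - (k + 1) = d := by omega
    have e3 : k + 1 + d - k = d + 1 := by omega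
    rw [gaussBinom, gaussBinom, gaussBinom, if_pos (by omega), if_pos (by omega),
      if_pos (by omega), e1, e2, e3]
    rw [show k + 1 + d + 1 = (k + 1 + d) + 1 from rfl, qsf_succ (k+1+d),
      qsf_succ d, qsf_succ k]
    exact field_aux _ _ _ _ _ _ _ (qsf_ne_zero k) (qsf_ne_zero d)
      (one_sub_X_pow_ne k) (one_sub_X_pow_ne d)
      (by rw [show k + 1 + d + 1 = (k+1) + (d+1) from by omega, pow_add]; ring)

lemma vandermonde2 (a b k : ℕ) :
    ∑ j ∈ Finset.range (k+1),
      (RatFunc.X : RatFunc ℚ) ^ (((a:ℤ)-(j:ℤ))*((k:ℤ)-(j:ℤ))) * gaussBinom a j * gaussBinom b (k-j)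
      = gaussBinom (a+b) k := by
  have hX : (RatFunc.X : RatFunc ℚ) ≠ 0 := RatFunc.X_ne_zero
  induction a generalizing k with
  | zero =>
    rw [Finset.sum_eq_single 0]
    · simp [gb_zero_right]
    · intro j _ hj
      rw [gb_of_lt (Nat.pos_of_ne_zero hj)]; ring
    · intro h; exact absurd (Finset.mem_range.2 k.succ_pos) h
  | succ a ih =>
    cases k with
    | zero => simp [gb_zero_right, gb_self]
    | succ k' =>
      rw [Finset.sum_range_succ']
      have key : ∀ j ∈ Finset.range (k'+1),
          (RatFunc.X : RatFunc ℚ) ^ ( ( ((a+1:ℕ):ℤ) - ((j+1:ℕ):ℤ) ) * ( ((k'+1:ℕ):ℤ) - ((j+1:ℕ):ℤ) ) ) *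
              gaussBinom (a+1) (j+1) * gaussBinom b (k'+1-(j+1))
          = RatFunc.X ^ (k'+1) *
              ((RatFunc.X : RatFunc ℚ) ^ ( ((a:ℤ) - ((j+1:ℕ):ℤ)) * ( ((k'+1:ℕ):ℤ) - ((j+1:ℕ):ℤ) ) ) *
                gaussBinom a (j+1) * gaussBinom b (k'+1-(j+1)))
            + (RatFunc.X : RatFunc ℚ) ^ ( ((a:ℤ) - (j:ℤ)) * ((k':ℤ) - (j:ℤ)) ) *
                gaussBinom a j * gaussBinom b (k'-j) := by
        intro j hj
        have hsub : k'+1-(j+1) = k'-j := by omega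
        rw [pascal a j, hsub]
        have h1 : (RatFunc.X : RatFunc ℚ) ^ ( ( ((a+1:ℕ):ℤ) - ((j+1:ℕ):ℤ) ) * ( ((k'+1:ℕ):ℤ) - ((j+1:ℕ):ℤ) ) ) *
            RatFunc.X ^ (j+1)
            = RatFunc.X ^ (k'+1) *
              (RatFunc.X : RatFunc ℚ) ^ ( ((a:ℤ) - ((j+1:ℕ):ℤ)) * ( ((k'+1:ℕ):ℤ) - ((j+1:ℕ):ℤ) ) ) := by
          rw [← zpow_natCast (RatFunc.X : RatFunc ℚ) (j+1), ← zpow_natCast (RatFunc.X : RatFunc ℚ) (k'+1),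
            ← zpow_add₀ hX, ← zpow_add₀ hX]
          congr 1; push_cast; ring
        have h2 : (RatFunc.X : RatFunc ℚ) ^ ( ( ((a+1:ℕ):ℤ) - ((j+1:ℕ):ℤ) ) * ( ((k'+1:ℕ):ℤ) - ((j+1:ℕ):ℤ) ) )
            = (RatFunc.X : RatFunc ℚ) ^ ( ((a:ℤ) - (j:ℤ)) * ((k':ℤ) - (j:ℤ)) ) := by
          congr 1; push_cast; ring
        linear_combination (gaussBinom a (j+1) * gaussBinom b (k'-j)) * h1 +
          (gaussBinom a j * gaussBinom b (k'-j)) * h2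
      rw [Finset.sum_congr rfl key, Finset.sum_add_distrib, ← Finset.mul_sum]
      have f0 : (RatFunc.X : RatFunc ℚ) ^ ( ( ((a+1:ℕ):ℤ) - ((0:ℕ):ℤ) ) * ( ((k'+1:ℕ):ℤ) - ((0:ℕ):ℤ) ) ) *
          gaussBinom (a+1) 0 * gaussBinom b (k'+1-0)
          = RatFunc.X ^ (k'+1) *
            ((RatFunc.X : RatFunc ℚ) ^ ( ((a:ℤ) - ((0:ℕ):ℤ)) * ( ((k'+1:ℕ):ℤ) - ((0:ℕ):ℤ) ) ) *
              gaussBinom a 0 * gaussBinom b (k'+1-0)) := by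
        rw [gb_zero_right, gb_zero_right]
        have h1 : (RatFunc.X : RatFunc ℚ) ^ ( ( ((a+1:ℕ):ℤ) - ((0:ℕ):ℤ) ) * ( ((k'+1:ℕ):ℤ) - ((0:ℕ):ℤ) ) )
            = RatFunc.X ^ (k'+1) *
              (RatFunc.X : RatFunc ℚ) ^ ( ((a:ℤ) - ((0:ℕ):ℤ)) * ( ((k'+1:ℕ):ℤ) - ((0:ℕ):ℤ) ) ) := by
          rw [← zpow_natCast (RatFunc.X : RatFunc ℚ) (k'+1), ← zpow_add₀ hX]
          congr 1; push_cast; ring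
        linear_combination (gaussBinom b (k'+1-0)) * h1
      rw [f0, add_right_comm, ← mul_add, ← Finset.sum_range_succ'
        (fun j => (RatFunc.X : RatFunc ℚ) ^ ( ((a:ℤ) - (j:ℤ)) * ( ((k'+1:ℕ):ℤ) - (j:ℤ) ) ) *
          gaussBinom a j * gaussBinom b (k'+1-j)) (k'+1)]
      rw [ih (k'+1), ih k', show a+1+b = (a+b)+1 by omega, pascal]

lemma sum_adt_succ {M : Type*} [AddCommMonoid M] (m k : ℕ) (F : (Fin (m+1) → ℕ) → M) :
    ∑ kf ∈ Finset.Nat.antidiagonalTuple (m+1) k, F kf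
    = ∑ p ∈ Finset.HasAntidiagonal.antidiagonal k, ∑ g ∈ Finset.Nat.antidiagonalTuple m p.2, F (Fin.cons p.1 g) := by
  rw [Finset.sum_sigma']
  refine Finset.sum_nbij' (fun kf => ⟨(kf 0, ∑ i : Fin m, Fin.tail kf i), Fin.tail kf⟩)
    (fun x => Fin.cons x.1.1 x.2) ?_ ?_ ?_ ?_ ?_
  · intro kf hkf
    rw [Finset.Nat.mem_antidiagonalTuple] at hkf
    refine Finset.mem_sigma.2 ⟨Finset.HasAntidiagonal.mem_antidiagonal.2 ?_, Finset.Nat.mem_antidiagonalTuple.2 rfl⟩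
    rw [← hkf, Fin.sum_univ_succ]; rfl
  · intro x hx
    rw [Finset.mem_sigma] at hx
    obtain ⟨h1, h2⟩ := hx
    rw [Finset.HasAntidiagonal.mem_antidiagonal] at h1
    rw [Finset.Nat.mem_antidiagonalTuple] at h2
    rw [Finset.Nat.mem_antidiagonalTuple, Fin.sum_univ_succ]
    simp only [Fin.cons_zero, Fin.cons_succ]
    rw [h2, h1]
  · intro kf _; exact Fin.cons_self_tail kf
  · intro x hx
    rw [Finset.mem_sigma] at hx
    obtain ⟨_, h2⟩ := hx
    rw [Finset.Nat.mem_antidiagonalTuple] at h2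
    refine Sigma.ext ?_ ?_
    · simp only [Fin.cons_zero, Fin.tail_cons]
      rw [h2]
    · simp [Fin.tail_cons]
  · intro kf _
    rw [Fin.cons_self_tail]

lemma e2_cons (m : ℕ) (x : ℕ) (g : Fin m → ℕ) :
    ∑ p ∈ Finset.univ.filter (fun p : Fin (m+1) × Fin (m+1) => p.1 < p.2),
        (Fin.cons x g : Fin (m+1) → ℕ) p.1 * (Fin.cons x g : Fin (m+1) → ℕ) p.2
    = x * (∑ i : Fin m, g i) +
      ∑ p ∈ Finset.univ.filter (fun p : Fin m × Fin m => p.1 < p.2), g p.1 * g p.2 := by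
  rw [Finset.sum_filter, Finset.sum_filter, Fintype.sum_prod_type, Fintype.sum_prod_type]
  rw [Fin.sum_univ_succ]
  simp only [Fin.sum_univ_succ, Fin.cons_zero, Fin.cons_succ, Fin.succ_pos, Fin.succ_lt_succ_iff,
    Fin.not_lt_zero, if_true, if_false, lt_irrefl, Finset.mul_sum, zero_add]

lemma sumA_cons (m : ℕ) (lam : ℕ → ℕ) (x : ℕ) (g : Fin m → ℕ) :
    ∑ i : Fin (m+1), (∑ t ∈ Finset.range (i : ℕ), lam t) * (Fin.cons x g : Fin (m+1) → ℕ) i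
    = lam 0 * (∑ i : Fin m, g i) +
      ∑ i : Fin m, (∑ t ∈ Finset.range (i : ℕ), lam (t+1)) * g i := by
  rw [Fin.sum_univ_succ]
  simp only [Fin.cons_zero, Fin.cons_succ, Fin.val_succ, Fin.val_zero, Finset.range_zero,
    Finset.sum_empty, zero_mul, zero_add]
  rw [Finset.mul_sum, ← Finset.sum_add_distrib]
  apply Finset.sum_congr rfl
  intro i _
  rw [Finset.sum_range_succ' lam, add_mul, mul_comm (lam 0)]
  ring

lemma sumA_cons_z (m : ℕ) (lam : ℕ → ℕ) (x : ℕ) (g : Fin m → ℕ) :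
    ∑ i : Fin (m+1), (((∑ t ∈ Finset.range (i : ℕ), lam t) * (Fin.cons x g : Fin (m+1) → ℕ) i : ℕ) : ℤ)
    = (lam 0 : ℤ) * ((∑ i : Fin m, g i : ℕ) : ℤ) +
      ∑ i : Fin m, (((∑ t ∈ Finset.range (i : ℕ), lam (t+1)) * g i : ℕ) : ℤ) := by
  rw [← Nat.cast_sum, ← Nat.cast_sum, sumA_cons]
  push_cast
  ring

lemma main_vandermonde (m k : ℕ) (lam : ℕ → ℕ) :
    ∑ kf ∈ Finset.Nat.antidiagonalTuple m k,
        RatFunc.X ^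
            ((∑ i : Fin m, ((∑ t ∈ Finset.range (i : ℕ), lam t) * kf i : ℕ) : ℤ) -
              ((∑ p ∈ Finset.univ.filter (fun p : Fin m × Fin m => p.1 < p.2),
                  kf p.1 * kf p.2 : ℕ) : ℤ)) *
          ∏ i : Fin m, gaussBinom (lam i) (kf i) =
      gaussBinom (∑ i ∈ Finset.range m, lam i) k := by
  have hX : (RatFunc.X : RatFunc ℚ) ≠ 0 := RatFunc.X_ne_zero
  induction m generalizing k lam with
  | zero =>
    cases k with
    | zero =>
      rw [Finset.Nat.antidiagonalTuple_zero_zero]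
      simp [gb_zero_right]
    | succ k =>
      rw [Finset.Nat.antidiagonalTuple_zero_succ]
      simp [gb_of_lt k.succ_pos]
  | succ m ih =>
    rw [sum_adt_succ]
    have inner : ∀ p ∈ Finset.HasAntidiagonal.antidiagonal k,
        (∑ g ∈ Finset.Nat.antidiagonalTuple m p.2,
          RatFunc.X ^
            ((∑ i : Fin (m+1), ((∑ t ∈ Finset.range (i : ℕ), lam t) *
                (Fin.cons p.1 g : Fin (m+1) → ℕ) i : ℕ) : ℤ) -
              ((∑ q ∈ Finset.univ.filter (fun q : Fin (m+1) × Fin (m+1) => q.1 < q.2),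
                  (Fin.cons p.1 g : Fin (m+1) → ℕ) q.1 * (Fin.cons p.1 g : Fin (m+1) → ℕ) q.2 : ℕ) : ℤ)) *
          ∏ i : Fin (m+1), gaussBinom (lam i) ((Fin.cons p.1 g : Fin (m+1) → ℕ) i))
        = RatFunc.X ^ (((lam 0 : ℤ) - (p.1 : ℤ)) * (p.2 : ℤ)) * gaussBinom (lam 0) p.1 *
            gaussBinom (∑ i ∈ Finset.range m, lam (i+1)) p.2 := by
      intro p hp
      rw [← ih p.2 (fun t => lam (t+1)), Finset.mul_sum]
      apply Finset.sum_congr rfl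
      intro g hg
      have hgsum : ∑ i : Fin m, g i = p.2 := Finset.Nat.mem_antidiagonalTuple.1 hg
      rw [sumA_cons_z, e2_cons, hgsum, Fin.prod_univ_succ]
      simp only [Fin.cons_zero, Fin.cons_succ, Fin.val_succ, Fin.val_zero]
      have hsplit : (RatFunc.X : RatFunc ℚ) ^
          (((lam 0 : ℤ) * (p.2 : ℤ) +
              ∑ i : Fin m, (((∑ t ∈ Finset.range (i : ℕ), lam (t+1)) * g i : ℕ) : ℤ)) -
            ((p.1 * p.2 + ∑ q ∈ Finset.univ.filter (fun q : Fin m × Fin m => q.1 < q.2),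
                g q.1 * g q.2 : ℕ) : ℤ))
          = RatFunc.X ^ (((lam 0 : ℤ) - (p.1 : ℤ)) * (p.2 : ℤ)) *
            RatFunc.X ^
              ((∑ i : Fin m, (((∑ t ∈ Finset.range (i : ℕ), lam (t+1)) * g i : ℕ) : ℤ)) -
                ((∑ q ∈ Finset.univ.filter (fun q : Fin m × Fin m => q.1 < q.2),
                    g q.1 * g q.2 : ℕ) : ℤ)) := by
        rw [← zpow_add₀ hX]
        congr 1; push_cast; ring
      rw [hsplit]
      ring
    rw [Finset.sum_congr rfl inner, Finset.Nat.sum_antidiagonal_eq_sum_range_succ_mk]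
    have castfix : ∀ j ∈ Finset.range (k+1),
        RatFunc.X ^ (((lam 0 : ℤ) - (j : ℤ)) * (((k - j : ℕ) : ℤ))) * gaussBinom (lam 0) j *
            gaussBinom (∑ i ∈ Finset.range m, lam (i+1)) (k - j)
        = RatFunc.X ^ (((lam 0 : ℤ) - (j : ℤ)) * ((k : ℤ) - (j : ℤ))) * gaussBinom (lam 0) j *
            gaussBinom (∑ i ∈ Finset.range m, lam (i+1)) (k - j) := by
      intro j hj
      rw [Finset.mem_range] at hj
      have : ((k - j : ℕ) : ℤ) = (k : ℤ) - (j : ℤ) := by omega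
      rw [this]
    rw [Finset.sum_congr rfl castfix, vandermonde2, Finset.sum_range_succ' lam, add_comm]

/-- Generalized q-Vandermonde (Corollary 4.1): for a composition `[λ₁,…,λ_m]` of `n`
with partial sums `a`,
`∑_{k₁+⋯+k_m=k} q^{a₁k₂+⋯+a_{m-1}k_m − e₂(k₁,…,k_m)} ∏ᵢ [λᵢ choose kᵢ]_q = [n choose k]_q`,
where the exponent is an integer (`q` is invertible in `ℚ(q)`). With 0-indexing,
`a₁k₂+⋯+a_{m-1}k_m = ∑ᵢ (λ₀+⋯+λ_{i-1})·kᵢ`. -/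
theorem generalized_q_vandermonde (k m n : ℕ) (hk : 0 < k) (hm : 0 < m) (hn : 0 < n)
    (lam : ℕ → ℕ) (hpos : ∀ i < m, 0 < lam i)
    (hsum : ∑ i ∈ Finset.range m, lam i = n) :
    ∑ kf ∈ Finset.Nat.antidiagonalTuple m k,
        RatFunc.X ^
            ((∑ i : Fin m, ((∑ t ∈ Finset.range (i : ℕ), lam t) * kf i : ℕ) : ℤ) -
              ((∑ p ∈ Finset.univ.filter (fun p : Fin m × Fin m => p.1 < p.2),
                  kf p.1 * kf p.2 : ℕ) : ℤ)) *
          ∏ i : Fin m, gaussBinom (lam i) (kf i) =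
      gaussBinom n k := by
  rw [← hsum]
  exact main_vandermonde m k lam
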